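/- arXiv:1709.10505 — 2 statements merged into one kernel-verified Lean document; each statement's English description precedes it below -/
import Mathlib

section
/- (Theorem 4: asymptotic null distribution of the Bregman divergence statistic.) Let F ∈ ℝ^{M₀} be a probability vector with strictly positive entries. Let (P̂_n) and (Q̂_n) be sequences of random vectors in ℝ^{M₀} such that the joint rescaled vector √n·((P̂_n − F), (Q̂_n − F)) ∈ ℝ^{2M₀} converges in distribution to a centered Gaussian law μ on ℝ^{2M₀}. Then 2n·D(P̂_n, Q̂_n) converges in distribution to the pushforward of μ under the map (x, y) ↦ Σ_{i=1}^{M₀} φ''(F_i) (x_i − y_i)², i.e. to the law of the quadratic form (X − Y)ᵀ diag(φ''(F_1), …, φ''(F_{M₀})) (X − Y) where (X, Y) has law μ. -/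
open MeasureTheory ProbabilityTheory Filter Topology

/-- The Bregman divergence on `ℝ^{M₀}`:
`D(p,q) = Σ_i [φ(p_i) − φ(q_i) − (p_i − q_i) φ'(q_i)]`. -/
noncomputable def bregmanVec (φ : ℝ → ℝ) {M₀ : ℕ} (p q : Fin M₀ → ℝ) : ℝ :=
  ∑ i, (φ (p i) - φ (q i) - (p i - q i) * deriv φ (q i))

lemma mvt_abs' {f f' : ℝ → ℝ} {s : Set ℝ} (hs : Convex ℝ s) {C : ℝ}
    (hf : ∀ x ∈ s, HasDerivAt f (f' x) x) (hb : ∀ x ∈ s, |f' x| ≤ C)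
    {a b : ℝ} (ha : a ∈ s) (hb' : b ∈ s) : |f b - f a| ≤ C * |b - a| := by
  have := hs.norm_image_sub_le_of_norm_hasDerivWithin_le
    (f := f) (f' := f') (fun x hx => (hf x hx).hasDerivWithinAt) (C := C)
    (fun x hx => hb x hx) ha hb'
  simpa [Real.norm_eq_abs] using this

lemma taylor_bound' {φ : ℝ → ℝ} (hφ : ContDiff ℝ 2 φ) (c K : ℝ)
    (q p : ℝ) (hK : ∀ t ∈ Set.uIcc q p, |deriv (deriv φ) t - c| ≤ K) :
    |φ p - φ q - (p - q) * deriv φ q - c / 2 * (p - q) ^ 2| ≤ K * (p - q) ^ 2 := by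
  have hφ' : ContDiff ℝ 1 (deriv φ) := by
    have := (contDiff_succ_iff_deriv.mp (by exact_mod_cast hφ : ContDiff ℝ ((1 : ℕ) + 1) φ)).2.2
    exact_mod_cast this
  have hd1 : Differentiable ℝ φ := hφ.differentiable (by norm_num)
  have hd2 : Differentiable ℝ (deriv φ) := hφ'.differentiable (by norm_num)
  have hK0 : 0 ≤ K := le_trans (abs_nonneg _) (hK q Set.left_mem_uIcc)
  have step1 : ∀ t ∈ Set.uIcc q p,
      |deriv φ t - deriv φ q - c * (t - q)| ≤ K * |t - q| := by
    intro t ht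
    have h1 : ∀ x ∈ Set.uIcc q p, HasDerivAt (fun u => deriv φ u - c * u)
        (deriv (deriv φ) x - c) x := fun x _ =>
      ((hd2 x).hasDerivAt).sub ((hasDerivAt_id x).const_mul c |>.congr_deriv (by ring))
    have := mvt_abs' (convex_uIcc q p) h1 hK Set.left_mem_uIcc ht
    calc |deriv φ t - deriv φ q - c * (t - q)|
        = |(deriv φ t - c * t) - (deriv φ q - c * q)| := by ring_nf
      _ ≤ K * |t - q| := this
  have step2 : ∀ x ∈ Set.uIcc q p, HasDerivAt
      (fun u => φ u - deriv φ q * u - c / 2 * (u - q) ^ 2)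
      (deriv φ x - deriv φ q - c * (x - q)) x := by
    intro x _
    have h1 : HasDerivAt φ (deriv φ x) x := (hd1 x).hasDerivAt
    have h2 : HasDerivAt (fun u => deriv φ q * u) (deriv φ q) x := by
      simpa using (hasDerivAt_id x).const_mul (deriv φ q)
    have h3 : HasDerivAt (fun u => c / 2 * (u - q) ^ 2) (c * (x - q)) x := by
      have : HasDerivAt (fun u => (u - q) ^ 2) (2 * (x - q)) x := by
        simpa using (((hasDerivAt_id x).sub_const q).fun_pow 2)
      have := this.const_mul (c / 2)
      exact this.congr_deriv (by ring)
    exact (h1.sub h2).sub h3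
  have bnd : ∀ x ∈ Set.uIcc q p, |deriv φ x - deriv φ q - c * (x - q)| ≤ K * |p - q| := by
    intro x hx
    refine (step1 x hx).trans ?_
    have hx' : |x - q| ≤ |p - q| := by
      rcases le_total q p with h | h
      · rw [Set.uIcc_of_le h] at hx
        rw [abs_of_nonneg (by linarith [hx.1]), abs_of_nonneg (by linarith)]
        linarith [hx.2]
      · rw [Set.uIcc_of_ge h] at hx
        rw [abs_of_nonpos (by linarith [hx.2]), abs_of_nonpos (by linarith)]
        linarith [hx.1]
    exact mul_le_mul_of_nonneg_left hx' hK0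
  have := mvt_abs' (convex_uIcc q p) step2 bnd Set.left_mem_uIcc Set.right_mem_uIcc
  calc |φ p - φ q - (p - q) * deriv φ q - c / 2 * (p - q) ^ 2|
      = |(φ p - deriv φ q * p - c / 2 * (p - q) ^ 2)
          - (φ q - deriv φ q * q - c / 2 * (q - q) ^ 2)| := by ring_nf
    _ ≤ K * |p - q| * |p - q| := this
    _ = K * (p - q) ^ 2 := by rw [mul_assoc, ← abs_mul, ← sq, abs_sq]


set_option maxHeartbeats 2000000 in
/-- Theorem 4: asymptotic null distribution of the Bregman
divergence statistic: if `√n((P̂ₙ − F), (Q̂ₙ − F))` converges in distribution to a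
centered Gaussian law `μ` on `ℝ^{2M₀}`, then `2n·D(P̂ₙ, Q̂ₙ)` converges in
distribution to the pushforward of `μ` under
`(x,y) ↦ Σ_i φ''(F_i)(x_i − y_i)²`. -/
theorem bregman_null_distribution
    {Ω : Type*} [MeasurableSpace Ω] (P : Measure Ω) [IsProbabilityMeasure P]
    (M₀ : ℕ) (hM₀ : 1 ≤ M₀)
    (φ : ℝ → ℝ) (hφC2 : ContDiff ℝ 2 φ) (hφconv : StrictConvexOn ℝ Set.univ φ)
    -- F is a probability vector with strictly positive entries
    (F : Fin M₀ → ℝ) (hFpos : ∀ i, 0 < F i) (hFsum : (∑ i, F i) = 1)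
    -- the sequences of random vectors
    (Phat Qhat : ℕ → Ω → (Fin M₀ → ℝ))
    (hPmeas : ∀ n, Measurable (Phat n)) (hQmeas : ∀ n, Measurable (Qhat n))
    -- μ is a centered Gaussian law on ℝ^{2M₀}
    (μ : Measure ((Fin M₀ ⊕ Fin M₀) → ℝ)) [IsProbabilityMeasure μ]
    (hμgauss : ∃ A : Matrix (Fin M₀ ⊕ Fin M₀) (Fin M₀ ⊕ Fin M₀) ℝ,
      μ = Measure.map (fun z => A.mulVec z)
        (Measure.pi fun _ : Fin M₀ ⊕ Fin M₀ => gaussianReal 0 1))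
    -- √n((P̂ₙ − F),(Q̂ₙ − F)) converges in distribution to μ
    (hconv : ∀ g : BoundedContinuousFunction ((Fin M₀ ⊕ Fin M₀) → ℝ) ℝ,
      Tendsto
        (fun n : ℕ => ∫ ω,
          g (Sum.elim (fun i => Real.sqrt n * (Phat n ω i - F i))
              (fun i => Real.sqrt n * (Qhat n ω i - F i))) ∂P)
        atTop (𝓝 (∫ z, g z ∂μ))) :
    -- conclusion: 2n·D(P̂ₙ,Q̂ₙ) →d pushforward of μ under the quadratic form
    ∀ g : BoundedContinuousFunction ℝ ℝ,
      Tendsto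
        (fun n : ℕ => ∫ ω,
          g (2 * n * bregmanVec φ (Phat n ω) (Qhat n ω)) ∂P)
        atTop
        (𝓝 (∫ z, g (∑ i, deriv (deriv φ) (F i) * (z (Sum.inl i) - z (Sum.inr i)) ^ 2) ∂μ)) := by
  intro g
  -- notation
  set E := (Fin M₀ ⊕ Fin M₀) → ℝ with hE
  set c : Fin M₀ → ℝ := fun i => deriv (deriv φ) (F i) with hc
  set Z : ℕ → Ω → E := fun n ω => Sum.elim (fun i => Real.sqrt n * (Phat n ω i - F i))
      (fun i => Real.sqrt n * (Qhat n ω i - F i)) with hZ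
  have hcont : Continuous (fun z : E => ∑ i, c i * (z (Sum.inl i) - z (Sum.inr i)) ^ 2) := by
    apply continuous_finset_sum
    intro i _
    exact continuous_const.mul (((continuous_apply (Sum.inl i)).sub (continuous_apply (Sum.inr i))).pow 2)
  set h : E → ℝ := fun z => ∑ i, c i * (z (Sum.inl i) - z (Sum.inr i)) ^ 2 with hh
  set H : BoundedContinuousFunction E ℝ := g.compContinuous ⟨h, hcont⟩ with hH
  have hZmeas : ∀ n, Measurable (Z n) := by
    intro n
    rw [measurable_pi_iff]
    rintro (i | i)
    · exact (((measurable_pi_apply i).comp (hPmeas n)).sub measurable_const).const_mul _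
    · exact (((measurable_pi_apply i).comp (hQmeas n)).sub measurable_const).const_mul _
  have hBtend : Tendsto (fun n : ℕ => ∫ ω, g (h (Z n ω)) ∂P) atTop
      (𝓝 (∫ z, g (∑ i, c i * (z (Sum.inl i) - z (Sum.inr i)) ^ 2) ∂μ)) := hconv H
  -- measurability and integrability of the statistics
  have hφcont : Continuous φ := hφC2.continuous
  have hφ'cont : Continuous (deriv φ) := hφC2.continuous_deriv (by norm_num)
  have hAmeas : ∀ n : ℕ, Measurable (fun ω => 2 * (n : ℝ) * bregmanVec φ (Phat n ω) (Qhat n ω)) := by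
    intro n
    apply Measurable.const_mul
    unfold bregmanVec
    apply Finset.measurable_sum
    intro i _
    have hp : Measurable fun ω => Phat n ω i := (measurable_pi_apply i).comp (hPmeas n)
    have hq : Measurable fun ω => Qhat n ω i := (measurable_pi_apply i).comp (hQmeas n)
    exact ((hφcont.measurable.comp hp).sub (hφcont.measurable.comp hq)).sub
      ((hp.sub hq).mul (hφ'cont.measurable.comp hq))
  have hgint : ∀ (f : Ω → ℝ), Measurable f → Integrable (fun ω => g (f ω)) P := by
    intro f hf
    refine (integrable_const ‖g‖).mono'
      ((g.continuous.measurable.comp hf).aestronglyMeasurable) ?_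
    exact Filter.Eventually.of_forall fun ω => g.norm_coe_le_norm _
  have hBmeas : ∀ n, Measurable (fun ω => h (Z n ω)) :=
    fun n => hcont.measurable.comp (hZmeas n)
  -- it suffices to prove the difference tends to 0
  have key : Tendsto (fun n : ℕ =>
      (∫ ω, g (2 * n * bregmanVec φ (Phat n ω) (Qhat n ω)) ∂P) - ∫ ω, g (h (Z n ω)) ∂P)
      atTop (𝓝 0) := by
    rw [NormedAddCommGroup.tendsto_nhds_zero]
    intro ε hε
    set G := ‖g‖ with hG
    have hG0 : 0 ≤ G := norm_nonneg _
    set δμ : ℝ := ε / (8 * (G + 1)) with hδμ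
    have hδμpos : 0 < δμ := by positivity
    -- choose R with small tail
    have htail : Tendsto (fun R : ℕ => μ {z : E | (R : ℝ) ≤ ‖z‖}) atTop (𝓝 0) := by
      have hmeas : ∀ R : ℕ, NullMeasurableSet {z : E | (R : ℝ) ≤ ‖z‖} μ := fun R =>
        (measurableSet_le measurable_const measurable_norm).nullMeasurableSet
      have hanti : Antitone (fun R : ℕ => {z : E | (R : ℝ) ≤ ‖z‖}) := by
        intro a b hab z hz
        have : (a:ℝ) ≤ b := by exact_mod_cast hab
        exact le_trans this hz
      have := tendsto_measure_iInter_atTop (μ := μ) hmeas hanti ⟨0, measure_ne_top μ _⟩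
      have hempty : (⋂ R : ℕ, {z : E | (R : ℝ) ≤ ‖z‖}) = ∅ := by
        ext z
        simp only [Set.mem_iInter, Set.mem_setOf_eq, Set.mem_empty_iff_false, iff_false, not_forall]
        obtain ⟨R, hR⟩ := exists_nat_gt ‖z‖
        exact ⟨R, not_le.mpr hR⟩
      rw [hempty] at this
      simpa [Function.comp_def] using this
    obtain ⟨R, hR⟩ : ∃ R : ℕ, (μ {z : E | (R : ℝ) ≤ ‖z‖}).toReal < δμ := by
      have := htail.eventually_lt_const (u := ENNReal.ofReal δμ) (by simpa using hδμpos)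
      obtain ⟨R, hR⟩ := this.exists
      exact ⟨R, ENNReal.toReal_lt_of_lt_ofReal hR⟩
    -- the bounded continuous tail test function
    set fR : E → ℝ := fun z => min 1 (max 0 (‖z‖ - R)) with hfR
    have fRcont : Continuous fR := by
      apply Continuous.min continuous_const
      exact Continuous.max continuous_const (continuous_norm.sub continuous_const)
    have fRmem : ∀ z, fR z ∈ Set.Icc (0 : ℝ) 1 := by
      intro z
      constructor
      · exact le_min zero_le_one (le_max_left _ _)
      · exact min_le_left _ _
    set fRB : BoundedContinuousFunction E ℝ := ⟨⟨fR, fRcont⟩, 1, fun x y =>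
      Real.dist_le_of_mem_Icc (fRmem x) (fRmem y) |>.trans (by norm_num)⟩ with hfRB
    have hfRB_apply : ∀ z, fRB z = fR z := fun _ => rfl
    have hSmeas : MeasurableSet {z : E | (R : ℝ) ≤ ‖z‖} :=
      measurableSet_le measurable_const measurable_norm
    have hfμ : ∫ z, fRB z ∂μ ≤ (μ {z : E | (R : ℝ) ≤ ‖z‖}).toReal := by
      have h1 : ∫ z, fRB z ∂μ ≤ ∫ z, Set.indicator {z : E | (R : ℝ) ≤ ‖z‖} (fun _ => (1:ℝ)) z ∂μ := by
        apply integral_mono (fRB.integrable μ)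
        · exact (integrable_const 1).indicator hSmeas
        · intro z
          rw [hfRB_apply]
          by_cases hz : (R : ℝ) ≤ ‖z‖
          · rw [Set.indicator_of_mem (show z ∈ {z : E | (R : ℝ) ≤ ‖z‖} from hz)]
            exact (fRmem z).2
          · rw [Set.indicator_of_notMem (show z ∉ {z : E | (R : ℝ) ≤ ‖z‖} from hz)]
            have hz' : ‖z‖ - (R:ℝ) ≤ 0 := by push_neg at hz; linarith
            show min 1 (max 0 (‖z‖ - R)) ≤ 0
            rw [max_eq_left hz', min_eq_right zero_le_one]
      rw [integral_indicator_const _ hSmeas] at h1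
      simpa [measureReal_def] using h1
    have hfn : ∀ᶠ n in atTop, ∫ ω, fRB (Z n ω) ∂P < δμ :=
      (hconv fRB).eventually_lt_const (lt_of_le_of_lt hfμ hR)
    -- control of the bad event
    have hPbad : ∀ n : ℕ, (P {ω | (R : ℝ) + 1 ≤ ‖Z n ω‖}).toReal ≤ ∫ ω, fRB (Z n ω) ∂P := by
      intro n
      have hBadmeas : MeasurableSet {ω | (R : ℝ) + 1 ≤ ‖Z n ω‖} :=
        measurableSet_le measurable_const (hZmeas n).norm
      have h1 : ∫ ω, Set.indicator {ω | (R : ℝ) + 1 ≤ ‖Z n ω‖} (fun _ => (1:ℝ)) ω ∂P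
          ≤ ∫ ω, fRB (Z n ω) ∂P := by
        apply integral_mono ((integrable_const 1).indicator hBadmeas)
        · refine (integrable_const 1).mono'
            ((fRcont.measurable.comp (hZmeas n)).aestronglyMeasurable) ?_
          exact Filter.Eventually.of_forall fun ω => by
            show ‖fR (Z n ω)‖ ≤ 1
            rw [Real.norm_eq_abs, abs_of_nonneg (fRmem _).1]; exact (fRmem _).2
        · intro ω
          show Set.indicator {ω | (R : ℝ) + 1 ≤ ‖Z n ω‖} (fun _ => (1:ℝ)) ω ≤ fR (Z n ω)
          by_cases hω : (R : ℝ) + 1 ≤ ‖Z n ω‖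
          · rw [Set.indicator_of_mem (show ω ∈ {ω | (R : ℝ) + 1 ≤ ‖Z n ω‖} from hω)]
            show (1:ℝ) ≤ min 1 (max 0 (‖Z n ω‖ - R))
            have h2 : (1:ℝ) ≤ ‖Z n ω‖ - R := by linarith
            rw [max_eq_right (by linarith), min_eq_left h2]
          · rw [Set.indicator_of_notMem (show ω ∉ {ω | (R : ℝ) + 1 ≤ ‖Z n ω‖} from hω)]
            exact (fRmem _).1
      rw [integral_indicator_const _ hBadmeas] at h1
      simpa [measureReal_def] using h1
    -- uniform continuity of g on a compact interval
    set C₀ : ℝ := (∑ i, |c i|) * (2 * ((R:ℝ) + 1)) ^ 2 with hC₀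
    have hC₀0 : 0 ≤ C₀ := by positivity
    have hgUC : UniformContinuousOn g (Set.Icc (-C₀ - 1) (C₀ + 1)) :=
      isCompact_Icc.uniformContinuousOn_of_continuous g.continuous.continuousOn
    obtain ⟨δ', hδ'pos, hδ'⟩ : ∃ δ' > 0, ∀ x ∈ Set.Icc (-C₀-1) (C₀+1),
        ∀ y ∈ Set.Icc (-C₀-1) (C₀+1), dist x y < δ' → dist (g x) (g y) < ε / 4 := by
      rw [Metric.uniformContinuousOn_iff] at hgUC
      obtain ⟨δ', h1, h2⟩ := hgUC (ε/4) (by positivity)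
      exact ⟨δ', h1, fun x hx y hy hxy => h2 x hx y hy hxy⟩
    set δ'' : ℝ := min δ' 1 with hδ''
    have hδ''pos : 0 < δ'' := lt_min hδ'pos one_pos
    have hδ''le1 : δ'' ≤ 1 := min_le_right _ _
    have hδ''leδ' : δ'' ≤ δ' := min_le_left _ _
    set εK : ℝ := δ'' / (8 * ((M₀:ℝ) + 1) * (((R:ℝ) + 1) ^ 2 + 1)) with hεK
    have hεKpos : 0 < εK := by positivity
    -- δF via continuity of φ'' at each F i
    have hφ''cont : Continuous (deriv (deriv φ)) := by
      have hφ' : ContDiff ℝ 1 (deriv φ) := by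
        have := (contDiff_succ_iff_deriv.mp
          (by exact_mod_cast hφC2 : ContDiff ℝ ((1 : ℕ) + 1) φ)).2.2
        exact_mod_cast this
      exact hφ'.continuous_deriv (by norm_num)
    have hcc : ∀ i : Fin M₀, ∃ δ > 0, ∀ t, |t - F i| ≤ δ →
        |deriv (deriv φ) t - c i| ≤ εK := by
      intro i
      obtain ⟨δ, hδpos, hδ⟩ :=
        Metric.continuousAt_iff.mp (hφ''cont.continuousAt (x := F i)) εK hεKpos
      refine ⟨δ/2, by positivity, fun t ht => ?_⟩
      have h2 : dist t (F i) < δ := by rw [Real.dist_eq]; linarith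
      have := hδ h2
      rw [Real.dist_eq] at this
      exact le_of_lt this
    choose δf hδfpos hδf using hcc
    haveI : Nonempty (Fin M₀) := ⟨⟨0, hM₀⟩⟩
    set δF : ℝ := Finset.univ.inf' Finset.univ_nonempty δf with hδF
    have hδFpos : 0 < δF := by
      rw [hδF, Finset.lt_inf'_iff]
      exact fun i _ => hδfpos i
    have hδFle : ∀ i, δF ≤ δf i := fun i => Finset.inf'_le _ (Finset.mem_univ i)
    -- the rank from which the Taylor approximation is good
    set N : ℕ := max 1 ⌈(((R:ℝ)+1)/δF)^2⌉₊ with hN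
    filter_upwards [hfn, eventually_ge_atTop N] with n hfn' hnN
    have hn1 : 1 ≤ n := le_trans (le_max_left _ _) hnN
    have hnpos : (0:ℝ) < n := by exact_mod_cast hn1
    have hsqrtpos : 0 < Real.sqrt n := Real.sqrt_pos.mpr hnpos
    have hsqrt : ((R:ℝ)+1) / Real.sqrt n ≤ δF := by
      have h1 : (((R:ℝ)+1)/δF)^2 ≤ (n:ℝ) := by
        refine le_trans (Nat.le_ceil _) ?_
        exact_mod_cast le_trans (le_max_right 1 _) hnN
      have h2 : ((R:ℝ)+1)/δF ≤ Real.sqrt n := by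
        rw [show ((R:ℝ)+1)/δF = Real.sqrt ((((R:ℝ)+1)/δF)^2) from
          (Real.sqrt_sq (by positivity)).symm]
        exact Real.sqrt_le_sqrt h1
      rw [div_le_iff₀ hsqrtpos]
      calc ((R:ℝ)+1) = (((R:ℝ)+1)/δF) * δF := by field_simp
        _ ≤ Real.sqrt n * δF := mul_le_mul_of_nonneg_right h2 hδFpos.le
        _ = δF * Real.sqrt n := mul_comm _ _
    have hBadmeas : MeasurableSet {ω | (R : ℝ) + 1 ≤ ‖Z n ω‖} :=
      measurableSet_le measurable_const (hZmeas n).norm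
    -- the pointwise estimate on the good event
    have hptwise : ∀ ω, ‖Z n ω‖ < (R:ℝ) + 1 →
        |g (2 * n * bregmanVec φ (Phat n ω) (Qhat n ω)) - g (h (Z n ω))| ≤ ε / 4 := by
      intro ω hω
      have hcoord : ∀ j, |Z n ω j| ≤ (R:ℝ) + 1 := fun j =>
        le_trans (by simpa [Real.norm_eq_abs] using norm_le_pi_norm (Z n ω) j) (le_of_lt hω)
      have hxb : ∀ i, |Real.sqrt n * (Phat n ω i - F i)| ≤ (R:ℝ) + 1 := fun i => by
        exact hcoord (Sum.inl i)
      have hyb : ∀ i, |Real.sqrt n * (Qhat n ω i - F i)| ≤ (R:ℝ) + 1 := fun i => by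
        exact hcoord (Sum.inr i)
      have hpF : ∀ i, |Phat n ω i - F i| ≤ δF := by
        intro i
        have h1 := hxb i
        rw [abs_mul, abs_of_nonneg hsqrtpos.le] at h1
        have h2 : |Phat n ω i - F i| ≤ ((R:ℝ)+1)/Real.sqrt n := by
          rw [le_div_iff₀ hsqrtpos]
          calc |Phat n ω i - F i| * Real.sqrt n
              = Real.sqrt n * |Phat n ω i - F i| := mul_comm _ _
            _ ≤ (R:ℝ)+1 := h1
        exact h2.trans hsqrt
      have hqF : ∀ i, |Qhat n ω i - F i| ≤ δF := by
        intro i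
        have h1 := hyb i
        rw [abs_mul, abs_of_nonneg hsqrtpos.le] at h1
        have h2 : |Qhat n ω i - F i| ≤ ((R:ℝ)+1)/Real.sqrt n := by
          rw [le_div_iff₀ hsqrtpos]
          calc |Qhat n ω i - F i| * Real.sqrt n
              = Real.sqrt n * |Qhat n ω i - F i| := mul_comm _ _
            _ ≤ (R:ℝ)+1 := h1
        exact h2.trans hsqrt
      have hK : ∀ i, ∀ t ∈ Set.uIcc (Qhat n ω i) (Phat n ω i),
          |deriv (deriv φ) t - c i| ≤ εK := by
        intro i t ht
        have hp := abs_le.mp (hpF i)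
        have hq := abs_le.mp (hqF i)
        have h1 : |t - F i| ≤ δF := by
          rw [abs_le]
          rcases Set.mem_uIcc.mp ht with ⟨ha, hb⟩ | ⟨ha, hb⟩ <;> constructor <;> linarith
        exact hδf i t (h1.trans (hδFle i))
      have htay : ∀ i, |2*(n:ℝ) * (φ (Phat n ω i) - φ (Qhat n ω i)
            - (Phat n ω i - Qhat n ω i) * deriv φ (Qhat n ω i))
          - c i * ((n:ℝ) * (Phat n ω i - Qhat n ω i)^2)|
          ≤ 2 * (n:ℝ) * εK * (Phat n ω i - Qhat n ω i)^2 := by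
        intro i
        have htb := taylor_bound' hφC2 (c i) εK (Qhat n ω i) (Phat n ω i) (hK i)
        have heq : 2*(n:ℝ) * (φ (Phat n ω i) - φ (Qhat n ω i)
              - (Phat n ω i - Qhat n ω i) * deriv φ (Qhat n ω i))
            - c i * ((n:ℝ) * (Phat n ω i - Qhat n ω i)^2)
            = 2*(n:ℝ) * ((φ (Phat n ω i) - φ (Qhat n ω i)
              - (Phat n ω i - Qhat n ω i) * deriv φ (Qhat n ω i))
              - c i / 2 * (Phat n ω i - Qhat n ω i)^2) := by ring
        rw [heq, abs_mul, abs_of_nonneg (by positivity : (0:ℝ) ≤ 2*(n:ℝ))]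
        calc 2*(n:ℝ) * |(φ (Phat n ω i) - φ (Qhat n ω i)
              - (Phat n ω i - Qhat n ω i) * deriv φ (Qhat n ω i))
              - c i / 2 * (Phat n ω i - Qhat n ω i)^2|
            ≤ 2*(n:ℝ) * (εK * (Phat n ω i - Qhat n ω i)^2) :=
              mul_le_mul_of_nonneg_left htb (by positivity)
          _ = 2 * (n:ℝ) * εK * (Phat n ω i - Qhat n ω i)^2 := by ring
      have hnpq : ∀ i, (n:ℝ) * (Phat n ω i - Qhat n ω i)^2 ≤ (2*((R:ℝ)+1))^2 := by
        intro i
        have h1 : |Real.sqrt n * (Phat n ω i - Qhat n ω i)| ≤ 2*((R:ℝ)+1) := by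
          have heq : Real.sqrt n * (Phat n ω i - Qhat n ω i)
              = Real.sqrt n * (Phat n ω i - F i) - Real.sqrt n * (Qhat n ω i - F i) := by ring
          rw [heq, abs_le]
          have hx := abs_le.mp (hxb i)
          have hy := abs_le.mp (hyb i)
          constructor <;> linarith
        calc (n:ℝ) * (Phat n ω i - Qhat n ω i)^2
            = (Real.sqrt n * (Phat n ω i - Qhat n ω i))^2 := by
              rw [mul_pow, Real.sq_sqrt (Nat.cast_nonneg n)]
          _ = |Real.sqrt n * (Phat n ω i - Qhat n ω i)|^2 := (sq_abs _).symm
          _ ≤ (2*((R:ℝ)+1))^2 := pow_le_pow_left₀ (abs_nonneg _) h1 2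
      have hBrw : h (Z n ω) = ∑ i, c i * ((n:ℝ) * (Phat n ω i - Qhat n ω i)^2) := by
        apply Finset.sum_congr rfl
        intro i _
        have heq : Z n ω (Sum.inl i) - Z n ω (Sum.inr i)
            = Real.sqrt n * (Phat n ω i - Qhat n ω i) := by
          show Real.sqrt n * (Phat n ω i - F i) - Real.sqrt n * (Qhat n ω i - F i) = _
          ring
        rw [heq, mul_pow, Real.sq_sqrt (Nat.cast_nonneg n)]
      have hAB : |2 * (n:ℝ) * bregmanVec φ (Phat n ω) (Qhat n ω) - h (Z n ω)| < δ'' := by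
        have hArw : 2 * (n:ℝ) * bregmanVec φ (Phat n ω) (Qhat n ω)
            = ∑ i, 2*(n:ℝ) * (φ (Phat n ω i) - φ (Qhat n ω i)
              - (Phat n ω i - Qhat n ω i) * deriv φ (Qhat n ω i)) := by
          rw [bregmanVec, Finset.mul_sum]
        rw [hArw, hBrw, ← Finset.sum_sub_distrib]
        refine lt_of_le_of_lt (Finset.abs_sum_le_sum_abs _ _) ?_
        have hsum : ∑ i, |2*(n:ℝ) * (φ (Phat n ω i) - φ (Qhat n ω i)
              - (Phat n ω i - Qhat n ω i) * deriv φ (Qhat n ω i))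
              - c i * ((n:ℝ) * (Phat n ω i - Qhat n ω i)^2)|
            ≤ ∑ _i : Fin M₀, (2 * εK * (2*((R:ℝ)+1))^2) := by
          apply Finset.sum_le_sum
          intro i _
          refine (htay i).trans ?_
          calc 2*(n:ℝ)*εK*(Phat n ω i - Qhat n ω i)^2
              = 2*εK*((n:ℝ)*(Phat n ω i - Qhat n ω i)^2) := by ring
            _ ≤ 2*εK*(2*((R:ℝ)+1))^2 :=
                mul_le_mul_of_nonneg_left (hnpq i) (by positivity)
            _ = 2 * εK * (2*((R:ℝ)+1))^2 := by ring
        refine lt_of_le_of_lt hsum ?_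
        rw [Finset.sum_const, Finset.card_univ, Fintype.card_fin, nsmul_eq_mul]
        have hstrict : (M₀:ℝ) * (2 * (2*((R:ℝ)+1))^2)
            < 8 * ((M₀:ℝ) + 1) * (((R:ℝ) + 1) ^ 2 + 1) := by nlinarith [Nat.cast_nonneg (α := ℝ) M₀]
        calc (M₀:ℝ) * (2 * εK * (2*((R:ℝ)+1))^2)
            = ((M₀:ℝ) * (2 * (2*((R:ℝ)+1))^2)) * εK := by ring
          _ < (8 * ((M₀:ℝ) + 1) * (((R:ℝ) + 1) ^ 2 + 1)) * εK :=
              mul_lt_mul_of_pos_right hstrict hεKpos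
          _ = δ'' := by
              rw [hεK]
              field_simp
      have hBb : |h (Z n ω)| ≤ C₀ := by
        rw [hBrw, hC₀]
        refine (Finset.abs_sum_le_sum_abs _ _).trans ?_
        rw [Finset.sum_mul]
        apply Finset.sum_le_sum
        intro i _
        rw [abs_mul, abs_of_nonneg (by positivity : (0:ℝ) ≤ (n:ℝ) * (Phat n ω i - Qhat n ω i)^2)]
        exact mul_le_mul_of_nonneg_left (hnpq i) (abs_nonneg _)
      have hBmem : h (Z n ω) ∈ Set.Icc (-C₀-1) (C₀+1) := by
        have := abs_le.mp hBb
        constructor <;> simp only [Set.mem_Icc] at * <;> [linarith; linarith]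
      have hAmem : 2 * (n:ℝ) * bregmanVec φ (Phat n ω) (Qhat n ω)
          ∈ Set.Icc (-C₀-1) (C₀+1) := by
        have h1 := abs_le.mp hBb
        have h2 := abs_le.mp hAB.le
        constructor <;> [skip; skip] <;> linarith
      have := hδ' _ hAmem _ hBmem (by rw [Real.dist_eq]; exact lt_of_lt_of_le hAB hδ''leδ')
      rw [Real.dist_eq] at this
      exact this.le
    -- integral assembly
    have hAint := hgint _ (hAmeas n)
    have hBint := hgint _ (hBmeas n)
    rw [← integral_sub hAint hBint]
    refine lt_of_le_of_lt (norm_integral_le_integral_norm _) ?_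
    have hmono : ∫ ω, ‖g (2 * n * bregmanVec φ (Phat n ω) (Qhat n ω)) - g (h (Z n ω))‖ ∂P
        ≤ ∫ ω, (ε/4 + Set.indicator {ω | (R : ℝ) + 1 ≤ ‖Z n ω‖} (fun _ => 2*G) ω) ∂P := by
      apply integral_mono (hAint.sub hBint).norm
      · exact (integrable_const (ε/4)).add ((integrable_const (2*G)).indicator hBadmeas)
      · intro ω
        show ‖g (2 * ↑n * bregmanVec φ (Phat n ω) (Qhat n ω)) - g (h (Z n ω))‖
          ≤ ε/4 + Set.indicator {ω | (R : ℝ) + 1 ≤ ‖Z n ω‖} (fun _ => 2*G) ω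
        by_cases hω : (R:ℝ)+1 ≤ ‖Z n ω‖
        · rw [Set.indicator_of_mem (show ω ∈ {ω | (R : ℝ) + 1 ≤ ‖Z n ω‖} from hω)]
          have h1 := g.norm_coe_le_norm (2 * n * bregmanVec φ (Phat n ω) (Qhat n ω))
          have h2 := g.norm_coe_le_norm (h (Z n ω))
          have := norm_sub_le (g (2 * n * bregmanVec φ (Phat n ω) (Qhat n ω))) (g (h (Z n ω)))
          have hε4 : (0:ℝ) < ε/4 := by positivity
          linarith
        · rw [Set.indicator_of_notMem (show ω ∉ {ω | (R : ℝ) + 1 ≤ ‖Z n ω‖} from hω)]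
          have := hptwise ω (not_le.mp hω)
          rw [Real.norm_eq_abs]
          linarith
    refine lt_of_le_of_lt hmono ?_
    rw [integral_add (integrable_const _) ((integrable_const (2*G)).indicator hBadmeas),
      integral_const, integral_indicator_const _ hBadmeas]
    have hPb : (P {ω | (R : ℝ) + 1 ≤ ‖Z n ω‖}).toReal < δμ := lt_of_le_of_lt (hPbad n) hfn'
    have hPb0 : 0 ≤ (P {ω | (R : ℝ) + 1 ≤ ‖Z n ω‖}).toReal := ENNReal.toReal_nonneg
    simp only [measureReal_def, measure_univ, ENNReal.toReal_one, smul_eq_mul, one_smul]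
    have hδμval : 2 * G * δμ ≤ ε / 4 := by
      have heq : 2*G*δμ = (2*G*ε)/(8*(G+1)) := by rw [hδμ]; ring
      rw [heq, div_le_div_iff₀ (by positivity) (by norm_num)]
      nlinarith [hG0, hε.le]
    have : (P {ω | (R : ℝ) + 1 ≤ ‖Z n ω‖}).toReal * (2*G) ≤ δμ * (2*G) :=
      mul_le_mul_of_nonneg_right hPb.le (by positivity)
    calc 1 * (ε/4) + (P {ω | (R : ℝ) + 1 ≤ ‖Z n ω‖}).toReal * (2*G)
        ≤ ε/4 + δμ * (2*G) := by linarith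
      _ ≤ ε/4 + ε/4 := by nlinarith
      _ < ε := by linarith
  have := key.add hBtend
  simpa using this
end

section
/- (Lemma 3: first-order stochastic Taylor expansion of the Bregman divergence statistic.) Let F, G ∈ ℝ^{M₀}. Let (P̂_n) and (Q̂_n) be sequences of random vectors in ℝ^{M₀} such that √n·((P̂_n − F), (Q̂_n − G)) converges in distribution to some probability law on ℝ^{2M₀}. Define K, N ∈ ℝ^{M₀} by K_i := φ'(F_i) − φ'(G_i) and N_i := −(F_i − G_i) φ''(G_i). Then the remainder R_n := D(P̂_n, Q̂_n) − D(F, G) − Kᵀ(P̂_n − F) − Nᵀ(Q̂_n − G) satisfies √n·R_n → 0 in probability as n → ∞. -/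
open MeasureTheory ProbabilityTheory Filter Topology

/-- A continuous cutoff function: `0` on the ball of radius `M`, `1` outside radius `M+1`. -/
noncomputable def btCutoff (E : Type*) [SeminormedAddCommGroup E] (M : ℝ) :
    BoundedContinuousFunction E ℝ :=
  BoundedContinuousFunction.mkOfBound
    ⟨fun z => min 1 (max 0 (‖z‖ - M)), by fun_prop⟩ 1 (by
      intro x y
      have h1 : ∀ z : E, 0 ≤ min 1 (max 0 (‖z‖ - M)) :=
        fun z => le_min zero_le_one (le_max_left _ _)
      have h2 : ∀ z : E, min 1 (max 0 (‖z‖ - M)) ≤ 1 := fun z => min_le_left _ _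
      rw [Real.dist_eq, abs_sub_le_iff]
      constructor <;> simp only [ContinuousMap.coe_mk] <;>
        [linarith [h1 y, h2 x]; linarith [h1 x, h2 y]])

@[simp] lemma btCutoff_apply (E : Type*) [SeminormedAddCommGroup E] (M : ℝ) (z : E) :
    btCutoff E M z = min 1 (max 0 (‖z‖ - M)) := rfl

lemma btCutoff_nonneg (E : Type*) [SeminormedAddCommGroup E] (M : ℝ) (z : E) :
    0 ≤ btCutoff E M z := le_min zero_le_one (le_max_left _ _)

lemma btCutoff_le_one (E : Type*) [SeminormedAddCommGroup E] (M : ℝ) (z : E) :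
    btCutoff E M z ≤ 1 := min_le_left _ _

lemma btCutoff_eq_zero (E : Type*) [SeminormedAddCommGroup E] {M : ℝ} {z : E}
    (h : ‖z‖ ≤ M) : btCutoff E M z = 0 := by
  simp only [btCutoff_apply]
  rw [max_eq_left (by linarith), min_eq_right zero_le_one]

lemma btCutoff_eq_one (E : Type*) [SeminormedAddCommGroup E] {M : ℝ} {z : E}
    (h : M + 1 ≤ ‖z‖) : btCutoff E M z = 1 := by
  simp only [btCutoff_apply]
  rw [max_eq_right (by linarith), min_eq_left (by linarith)]

/-- Probabilistic core: if `√n • Xₙ` converges in distribution and `g = o(‖z‖)` at `0`,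
then `√n g(Xₙ) → 0` in probability. -/
lemma bt_aux_prob {Ω : Type*} [MeasurableSpace Ω] (P : Measure Ω) [IsProbabilityMeasure P]
    {E : Type*} [NormedAddCommGroup E] [NormedSpace ℝ E] [MeasurableSpace E] [BorelSpace E]
    (X : ℕ → Ω → E) (hX : ∀ n, Measurable (X n))
    (g : E → ℝ) (hg : g =o[𝓝 0] fun z : E => z)
    (ν : Measure E) [IsProbabilityMeasure ν]
    (hconv : ∀ ψ : BoundedContinuousFunction E ℝ,
      Tendsto (fun n : ℕ => ∫ ω, ψ (Real.sqrt (n : ℝ) • X n ω) ∂P) atTop (𝓝 (∫ z, ψ z ∂ν))) :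
    TendstoInMeasure P (fun (n : ℕ) ω => Real.sqrt (n : ℝ) * g (X n ω)) atTop (fun _ => 0) := by
  rw [tendstoInMeasure_iff_dist]
  intro ε hε
  rw [ENNReal.tendsto_nhds_zero]
  intro δ hδ
  -- a positive real below δ
  obtain ⟨r, hr0, hrδ⟩ : ∃ r : ℝ, 0 < r ∧ ENNReal.ofReal r ≤ δ := by
    have hne : min δ 1 ≠ ⊤ := ne_top_of_le_ne_top (by simp) (min_le_right _ _)
    refine ⟨(min δ 1).toReal, ENNReal.toReal_pos (lt_min hδ zero_lt_one).ne' hne, ?_⟩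
    rw [ENNReal.ofReal_toReal hne]
    exact min_le_left _ _
  -- tightness of ν
  have hmeasA : ∀ M : ℕ, MeasurableSet {z : E | (M : ℝ) < ‖z‖} :=
    fun M => measurableSet_lt measurable_const measurable_norm
  have htail : Tendsto (fun M : ℕ => ν {z : E | (M : ℝ) < ‖z‖}) atTop (𝓝 0) := by
    have hAnt : Antitone fun M : ℕ => {z : E | (M : ℝ) < ‖z‖} := by
      intro a b hab z hz
      simp only [Set.mem_setOf_eq] at *
      have : (a : ℝ) ≤ b := by exact_mod_cast hab
      linarith
    have h := MeasureTheory.tendsto_measure_iInter_atTop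
      (μ := ν) (fun M => (hmeasA M).nullMeasurableSet) hAnt ⟨0, measure_ne_top ν _⟩
    have hempty : ⋂ M : ℕ, {z : E | (M : ℝ) < ‖z‖} = ∅ := by
      ext z
      simp only [Set.mem_iInter, Set.mem_setOf_eq, Set.mem_empty_iff_false, iff_false, not_forall,
        not_lt]
      obtain ⟨M, hM⟩ := exists_nat_gt ‖z‖
      exact ⟨M, hM.le⟩
    rw [hempty, measure_empty] at h
    exact h
  obtain ⟨M, hM⟩ : ∃ M : ℕ, (ν {z : E | (M : ℝ) < ‖z‖}).toReal < r / 2 := by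
    have := (htail.eventually_lt_const (ENNReal.ofReal_pos.mpr (by linarith : (0:ℝ) < r/2))).exists
    obtain ⟨M, hM⟩ := this
    exact ⟨M, (ENNReal.lt_ofReal_iff_toReal_lt (measure_ne_top ν _)).mp hM⟩
  set ψ := btCutoff E (M : ℝ) with hψdef
  have hψν : ∫ z, ψ z ∂ν ≤ (ν {z : E | (M : ℝ) < ‖z‖}).toReal := by
    rw [← measureReal_def, ← MeasureTheory.integral_indicator_one (hmeasA M)]
    refine integral_mono (ψ.integrable ν) ((integrable_const (1:ℝ)).indicator (hmeasA M)) ?_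
    intro z
    by_cases hz : (M : ℝ) < ‖z‖
    · have hzmem : z ∈ {z : E | (M : ℝ) < ‖z‖} := hz
      rw [Set.indicator_of_mem hzmem]
      simp only [Pi.one_apply]
      exact btCutoff_le_one E (M : ℝ) z
    · have hzmem : z ∉ {z : E | (M : ℝ) < ‖z‖} := hz
      rw [Set.indicator_of_notMem hzmem]
      exact le_of_eq (btCutoff_eq_zero E (not_lt.mp hz))
  have hlim : ∫ z, ψ z ∂ν < r := lt_of_le_of_lt hψν (by linarith)
  have hev1 : ∀ᶠ n : ℕ in atTop, ∫ ω, ψ (Real.sqrt (n : ℝ) • X n ω) ∂P < r :=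
    (hconv ψ).eventually_lt_const hlim
  -- Chebyshev-type bound
  have hP : ∀ n : ℕ, P {ω | (M : ℝ) + 1 ≤ ‖Real.sqrt (n : ℝ) • X n ω‖}
      ≤ ENNReal.ofReal (∫ ω, ψ (Real.sqrt (n : ℝ) • X n ω) ∂P) := by
    intro n
    set B := {ω | (M : ℝ) + 1 ≤ ‖Real.sqrt (n : ℝ) • X n ω‖} with hBdef
    have hZmeas : Measurable fun ω => Real.sqrt (n : ℝ) • X n ω := (hX n).const_smul _
    have hBmeas : MeasurableSet B := measurableSet_le measurable_const hZmeas.norm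
    have hint : Integrable (fun ω => ψ (Real.sqrt (n : ℝ) • X n ω)) P := by
      refine Integrable.mono' (integrable_const (1:ℝ))
        ((ψ.continuous.measurable.comp hZmeas).aestronglyMeasurable) ?_
      filter_upwards with ω
      rw [Real.norm_eq_abs, abs_le]
      exact ⟨by linarith [btCutoff_nonneg E (M:ℝ) (Real.sqrt (n : ℝ) • X n ω)],
        btCutoff_le_one E (M:ℝ) _⟩
    have h1 : (P B).toReal ≤ ∫ ω, ψ (Real.sqrt (n : ℝ) • X n ω) ∂P := by
      have e1 : (P B).toReal = ∫ _ in B, (1:ℝ) ∂P := by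
        simp [MeasureTheory.setIntegral_const, measureReal_def]
      rw [e1]
      calc ∫ _ in B, (1:ℝ) ∂P ≤ ∫ ω in B, ψ (Real.sqrt (n : ℝ) • X n ω) ∂P := by
            refine setIntegral_mono_on (integrableOn_const (measure_ne_top P B))
              hint.integrableOn hBmeas ?_
            intro ω hω
            rw [btCutoff_eq_one E hω]
        _ ≤ ∫ ω, ψ (Real.sqrt (n : ℝ) • X n ω) ∂P := by
            refine setIntegral_le_integral hint ?_
            filter_upwards with ω
            exact btCutoff_nonneg E (M:ℝ) _
    calc P B = ENNReal.ofReal (P B).toReal := (ENNReal.ofReal_toReal (measure_ne_top P B)).symm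
      _ ≤ _ := ENNReal.ofReal_le_ofReal h1
  -- the little-o bound
  set c : ℝ := ε / ((M : ℝ) + 2) with hc
  have hc0 : 0 < c := div_pos hε (by positivity)
  obtain ⟨η, hη0, hη⟩ : ∃ η > 0, ∀ z : E, dist z 0 < η → ‖g z‖ ≤ c * ‖z‖ := by
    have := (hg.def hc0)
    rw [Metric.eventually_nhds_iff] at this
    obtain ⟨η, hη0, h⟩ := this
    exact ⟨η, hη0, fun z hz => by simpa using h hz⟩
  -- √n → ∞
  have hsqrt : Tendsto (fun n : ℕ => Real.sqrt (n : ℝ)) atTop atTop := by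
    apply tendsto_atTop_atTop.mpr
    intro b
    refine ⟨⌈b ^ 2⌉₊, fun n hn => ?_⟩
    have h1 : b ^ 2 ≤ (n : ℝ) := le_trans (Nat.le_ceil _) (by exact_mod_cast hn)
    calc b ≤ |b| := le_abs_self b
      _ = Real.sqrt (b ^ 2) := (Real.sqrt_sq_eq_abs b).symm
      _ ≤ Real.sqrt (n : ℝ) := Real.sqrt_le_sqrt h1
  filter_upwards [hev1, hsqrt.eventually_ge_atTop (((M : ℝ) + 1) / η + 1)] with n hn1 hn2
  have hsub : {ω | ε ≤ dist (Real.sqrt (n : ℝ) * g (X n ω)) 0}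
      ⊆ {ω | (M : ℝ) + 1 ≤ ‖Real.sqrt (n : ℝ) • X n ω‖} := by
    intro ω hω
    simp only [Set.mem_setOf_eq, dist_zero_right, Real.norm_eq_abs] at hω ⊢
    by_contra hlt
    push_neg at hlt
    set s := Real.sqrt (n : ℝ) with hs
    have hs0 : 0 < s := by
      have : (0:ℝ) < ((M:ℝ)+1)/η + 1 := by positivity
      linarith
    have hnorm : ‖Real.sqrt (n : ℝ) • X n ω‖ = s * ‖X n ω‖ := by
      rw [norm_smul, Real.norm_eq_abs, abs_of_nonneg (Real.sqrt_nonneg _)]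
    rw [hnorm] at hlt
    have hXlt : ‖X n ω‖ < η := by
      have h1 : ‖X n ω‖ < ((M:ℝ)+1) / s := by
        rw [lt_div_iff₀ hs0]; linarith [hlt]
      have h2 : ((M:ℝ)+1) / s ≤ η := by
        rw [div_le_iff₀ hs0]
        have : ((M:ℝ)+1)/η ≤ s := by linarith
        calc (M:ℝ)+1 = η * (((M:ℝ)+1)/η) := by field_simp
          _ ≤ η * s := by nlinarith
      linarith
    have hgb : ‖g (X n ω)‖ ≤ c * ‖X n ω‖ := hη _ (by simpa using hXlt)
    rw [Real.norm_eq_abs] at hgb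
    have : |s * g (X n ω)| = s * |g (X n ω)| := by
      rw [abs_mul, abs_of_nonneg hs0.le]
    rw [this] at hω
    have hb1 : s * |g (X n ω)| ≤ c * (s * ‖X n ω‖) := by nlinarith
    have hb2 : c * (s * ‖X n ω‖) < c * ((M:ℝ) + 1) := by nlinarith
    have hb3 : c * ((M:ℝ) + 1) < ε := by
      rw [hc]
      rw [div_mul_eq_mul_div, div_lt_iff₀ (by positivity : (0:ℝ) < (M:ℝ)+2)]
      nlinarith
    linarith
  calc P {ω | ε ≤ dist (Real.sqrt (n : ℝ) * g (X n ω)) 0}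
      ≤ P {ω | (M : ℝ) + 1 ≤ ‖Real.sqrt (n : ℝ) • X n ω‖} := measure_mono hsub
    _ ≤ ENNReal.ofReal (∫ ω, ψ (Real.sqrt (n : ℝ) • X n ω) ∂P) := hP n
    _ ≤ ENNReal.ofReal r := ENNReal.ofReal_le_ofReal hn1.le
    _ ≤ δ := hrδ


/-- Lemma 3: first-order stochastic Taylor expansion of the
Bregman divergence statistic: if `√n((P̂ₙ − F), (Q̂ₙ − G))` converges in
distribution, then the remainder
`Rₙ = D(P̂ₙ,Q̂ₙ) − D(F,G) − Kᵀ(P̂ₙ − F) − Nᵀ(Q̂ₙ − G)` satisfies `√n Rₙ → 0`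
in probability. -/
theorem bregman_taylor_expansion
    {Ω : Type*} [MeasurableSpace Ω] (P : Measure Ω) [IsProbabilityMeasure P]
    (M₀ : ℕ) (hM₀ : 1 ≤ M₀)
    (φ : ℝ → ℝ) (hφC2 : ContDiff ℝ 2 φ) (hφconv : StrictConvexOn ℝ Set.univ φ)
    (F G : Fin M₀ → ℝ)
    -- the sequences of random vectors
    (Phat Qhat : ℕ → Ω → (Fin M₀ → ℝ))
    (hPmeas : ∀ n, Measurable (Phat n)) (hQmeas : ∀ n, Measurable (Qhat n))
    -- √n((P̂ₙ − F),(Q̂ₙ − G)) converges in distribution to some probability law ν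
    (ν : Measure ((Fin M₀ ⊕ Fin M₀) → ℝ)) [IsProbabilityMeasure ν]
    (hconv : ∀ g : BoundedContinuousFunction ((Fin M₀ ⊕ Fin M₀) → ℝ) ℝ,
      Tendsto
        (fun n : ℕ => ∫ ω,
          g (Sum.elim (fun i => Real.sqrt n * (Phat n ω i - F i))
              (fun i => Real.sqrt n * (Qhat n ω i - G i))) ∂P)
        atTop (𝓝 (∫ z, g z ∂ν)))
    -- the gradient vectors K and N of D at (F,G)
    (K N : Fin M₀ → ℝ)
    (hK : ∀ i, K i = deriv φ (F i) - deriv φ (G i))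
    (hN : ∀ i, N i = -(F i - G i) * deriv (deriv φ) (G i)) :
    -- conclusion: √n·Rₙ → 0 in probability
    TendstoInMeasure P
      (fun (n : ℕ) (ω : Ω) =>
        Real.sqrt n *
          (bregmanVec φ (Phat n ω) (Qhat n ω) - bregmanVec φ F G
            - ∑ i, K i * (Phat n ω i - F i) - ∑ i, N i * (Qhat n ω i - G i)))
      atTop (fun _ => 0) := by
  classical
  -- differentiability facts
  have h2 : ContDiff ℝ ((1 : WithTop ℕ∞) + 1) φ := by
    have : ((1 : WithTop ℕ∞) + 1) = 2 := by norm_num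
    rw [this]; exact hφC2
  obtain ⟨hd1, -, hd1'⟩ := contDiff_succ_iff_deriv.mp h2
  have hd2 : Differentiable ℝ (deriv φ) := hd1'.differentiable one_ne_zero
  -- the linear functional L
  set L : ((Fin M₀ ⊕ Fin M₀) → ℝ) →L[ℝ] ℝ :=
    ∑ i : Fin M₀,
      (K i • (ContinuousLinearMap.proj (Sum.inl i) : ((Fin M₀ ⊕ Fin M₀) → ℝ) →L[ℝ] ℝ)
        + N i • (ContinuousLinearMap.proj (Sum.inr i) : ((Fin M₀ ⊕ Fin M₀) → ℝ) →L[ℝ] ℝ))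
    with hLdef
  -- the Bregman divergence as a function of the joint increment
  set f : ((Fin M₀ ⊕ Fin M₀) → ℝ) → ℝ := fun z =>
    ∑ i : Fin M₀, (φ (F i + z (Sum.inl i)) - φ (G i + z (Sum.inr i))
      - (F i + z (Sum.inl i) - (G i + z (Sum.inr i))) * deriv φ (G i + z (Sum.inr i)))
    with hfdef
  have hDf : HasFDerivAt f L 0 := by
    rw [hfdef, hLdef]
    apply HasFDerivAt.fun_sum
    intro i _
    have hA : HasFDerivAt (fun z : (Fin M₀ ⊕ Fin M₀) → ℝ => F i + z (Sum.inl i))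
        ((ContinuousLinearMap.proj (Sum.inl i) : ((Fin M₀ ⊕ Fin M₀) → ℝ) →L[ℝ] ℝ)) 0 :=
      ((ContinuousLinearMap.proj (Sum.inl i) :
        ((Fin M₀ ⊕ Fin M₀) → ℝ) →L[ℝ] ℝ).hasFDerivAt (x := 0)).const_add (F i)
    have hB : HasFDerivAt (fun z : (Fin M₀ ⊕ Fin M₀) → ℝ => G i + z (Sum.inr i))
        ((ContinuousLinearMap.proj (Sum.inr i) : ((Fin M₀ ⊕ Fin M₀) → ℝ) →L[ℝ] ℝ)) 0 :=
      ((ContinuousLinearMap.proj (Sum.inr i) :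
        ((Fin M₀ ⊕ Fin M₀) → ℝ) →L[ℝ] ℝ).hasFDerivAt (x := 0)).const_add (G i)
    have hdA : HasDerivAt φ (deriv φ (F i)) (F i + (0 : (Fin M₀ ⊕ Fin M₀) → ℝ) (Sum.inl i)) := by
      simpa using (hd1 (F i)).hasDerivAt
    have hdB : HasDerivAt φ (deriv φ (G i)) (G i + (0 : (Fin M₀ ⊕ Fin M₀) → ℝ) (Sum.inr i)) := by
      simpa using (hd1 (G i)).hasDerivAt
    have hdB2 : HasDerivAt (deriv φ) (deriv (deriv φ) (G i))
        (G i + (0 : (Fin M₀ ⊕ Fin M₀) → ℝ) (Sum.inr i)) := by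
      simpa using (hd2 (G i)).hasDerivAt
    have hφA : HasFDerivAt (fun z : (Fin M₀ ⊕ Fin M₀) → ℝ => φ (F i + z (Sum.inl i)))
        (deriv φ (F i) • (ContinuousLinearMap.proj (Sum.inl i) :
          ((Fin M₀ ⊕ Fin M₀) → ℝ) →L[ℝ] ℝ)) 0 := by
      exact hdA.comp_hasFDerivAt 0 hA
    have hφB : HasFDerivAt (fun z : (Fin M₀ ⊕ Fin M₀) → ℝ => φ (G i + z (Sum.inr i)))
        (deriv φ (G i) • (ContinuousLinearMap.proj (Sum.inr i) :
          ((Fin M₀ ⊕ Fin M₀) → ℝ) →L[ℝ] ℝ)) 0 := by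
      exact hdB.comp_hasFDerivAt 0 hB
    have hv : HasFDerivAt (fun z : (Fin M₀ ⊕ Fin M₀) → ℝ => deriv φ (G i + z (Sum.inr i)))
        (deriv (deriv φ) (G i) • (ContinuousLinearMap.proj (Sum.inr i) :
          ((Fin M₀ ⊕ Fin M₀) → ℝ) →L[ℝ] ℝ)) 0 := by
      exact hdB2.comp_hasFDerivAt 0 hB
    have hu : HasFDerivAt
        (fun z : (Fin M₀ ⊕ Fin M₀) → ℝ => F i + z (Sum.inl i) - (G i + z (Sum.inr i)))
        ((ContinuousLinearMap.proj (Sum.inl i) : ((Fin M₀ ⊕ Fin M₀) → ℝ) →L[ℝ] ℝ)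
          - ContinuousLinearMap.proj (Sum.inr i)) 0 := hA.sub hB
    have hmul := hu.fun_mul hv
    have htotal := (hφA.fun_sub hφB).fun_sub hmul
    convert htotal using 1
    refine ContinuousLinearMap.ext fun z => ?_
    simp only [ContinuousLinearMap.add_apply, ContinuousLinearMap.sub_apply,
      ContinuousLinearMap.smul_apply, ContinuousLinearMap.proj_apply, smul_eq_mul,
      Pi.zero_apply, add_zero, hK, hN]
    ring
  have hgo : (fun z : (Fin M₀ ⊕ Fin M₀) → ℝ => f z - f 0 - L z) =o[𝓝 0] fun z => z := by
    have h := hasFDerivAt_iff_isLittleO_nhds_zero.mp hDf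
    simpa using h
  -- the random increments
  set X : ℕ → Ω → (Fin M₀ ⊕ Fin M₀) → ℝ := fun n ω =>
    Sum.elim (fun i => Phat n ω i - F i) (fun i => Qhat n ω i - G i) with hXdef
  have hXmeas : ∀ n, Measurable (X n) := by
    intro n
    apply measurable_pi_lambda
    rintro (i | i)
    · exact ((measurable_pi_apply i).comp (hPmeas n)).sub measurable_const
    · exact ((measurable_pi_apply i).comp (hQmeas n)).sub measurable_const
  have hXsmul : ∀ (n : ℕ) (ω : Ω), Real.sqrt (n : ℝ) • X n ω
      = Sum.elim (fun i => Real.sqrt n * (Phat n ω i - F i))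
          (fun i => Real.sqrt n * (Qhat n ω i - G i)) := by
    intro n ω
    funext j
    cases j <;> simp [hXdef, smul_eq_mul]
  have hmain := bt_aux_prob P X hXmeas (fun z => f z - f 0 - L z) hgo ν
    (by intro ψ; simpa only [hXsmul] using hconv ψ)
  -- identify the two functions
  have hfeq : ∀ (n : ℕ) (ω : Ω), bregmanVec φ (Phat n ω) (Qhat n ω) = f (X n ω) := by
    intro n ω
    rw [hfdef]
    simp only [bregmanVec]
    refine Finset.sum_congr rfl fun i _ => ?_
    have e1 : F i + X n ω (Sum.inl i) = Phat n ω i := by simp [hXdef]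
    have e2 : G i + X n ω (Sum.inr i) = Qhat n ω i := by simp [hXdef]
    rw [e1, e2]
  have hf0 : f 0 = bregmanVec φ F G := by
    simp [hfdef, bregmanVec]
  have hLeq : ∀ (n : ℕ) (ω : Ω), L (X n ω)
      = (∑ i, K i * (Phat n ω i - F i)) + ∑ i, N i * (Qhat n ω i - G i) := by
    intro n ω
    rw [hLdef]
    simp [ContinuousLinearMap.sum_apply, ContinuousLinearMap.add_apply,
      ContinuousLinearMap.smul_apply, ContinuousLinearMap.proj_apply, hXdef, smul_eq_mul,
      Finset.sum_add_distrib]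
  have heq : (fun (n : ℕ) (ω : Ω) =>
        Real.sqrt n *
          (bregmanVec φ (Phat n ω) (Qhat n ω) - bregmanVec φ F G
            - ∑ i, K i * (Phat n ω i - F i) - ∑ i, N i * (Qhat n ω i - G i)))
      = fun (n : ℕ) (ω : Ω) => Real.sqrt (n : ℝ) * (f (X n ω) - f 0 - L (X n ω)) := by
    funext n ω
    rw [hfeq n ω, hf0, hLeq n ω]
    ring
  rw [heq]
  exact hmain
end
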